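/- Let ⟨Z_n,{a,b}⟩ be a standardized DFA and r ≠ 0 with r·a = dupl(a). Then the set D₁⁰ = D₁ ∪ {0} is closed under addition of r; consequently D₁⁰ is a union of cosets of the cyclic subgroup ⟨r⟩ of (Z_n,+). -/

import Mathlib

/-- Action of a letter: `true` is `b : q ↦ q+1`, `false` is `a`. -/
def act {n : ℕ} (a : ZMod n → ZMod n) (q : ZMod n) (c : Bool) : ZMod n :=
  if c then q + 1 else a q

/-- Action of a word on a state. -/
def wact {n : ℕ} (a : ZMod n → ZMod n) (w : List Bool) (q : ZMod n) : ZMod n :=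
  w.foldl (act a) q

/-- Excluded set of a word. -/
def excl {n : ℕ} (a : ZMod n → ZMod n) (w : List Bool) : Set (ZMod n) :=
  {q | ∀ p, wact a w p ≠ q}

/-- Duplicate set of a word. -/
def dupl {n : ℕ} (a : ZMod n → ZMod n) (w : List Bool) : Set (ZMod n) :=
  {p | ∃ q₁ q₂, q₁ ≠ q₂ ∧ wact a w q₁ = p ∧ wact a w q₂ = p}

/-- Complete reachability for a standardized binary DFA on `ZMod n`. -/
def CompletelyReachable {n : ℕ} (a : ZMod n → ZMod n) : Prop :=
  ∀ S : Set (ZMod n), S.Nonempty → ∃ w : List Bool, Set.range (wact a w) = S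

/-- Standardized DFA: `a` has defect 1 with excluded state `0`, and `0·a = dupl(a)`,
i.e. `a 0` has a second preimage `r ≠ 0`. -/
def Standardized {n : ℕ} (a : ZMod n → ZMod n) : Prop :=
  Set.range a = {(0 : ZMod n)}ᶜ ∧ ∃ r : ZMod n, r ≠ 0 ∧ a r = a 0

/-- Edge of the Rystsov graph: for some word of defect 1, `q` is the excluded state
and `p` the duplicate state. -/
def RysEdge {n : ℕ} (a : ZMod n → ZMod n) (q p : ZMod n) : Prop :=
  ∃ w : List Bool, excl a w = {q} ∧ dupl a w = {p}

/-- The difference set `D₁`. -/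
def D1 {n : ℕ} (a : ZMod n → ZMod n) : Set (ZMod n) :=
  {p | RysEdge a 0 p}

section Aux

variable {n : ℕ} {a : ZMod n → ZMod n}

lemma wact_append (a : ZMod n → ZMod n) (w v : List Bool) (q : ZMod n) :
    wact a (w ++ v) q = wact a v (wact a w q) := by
  unfold wact; rw [List.foldl_append]

lemma wact_false (a : ZMod n → ZMod n) (w : List Bool) (q : ZMod n) :
    wact a (w ++ [false]) q = a (wact a w q) := by
  rw [wact_append]; rfl

lemma wact_replicate_true (a : ZMod n → ZMod n) (m : ℕ) (q : ZMod n) :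
    wact a (List.replicate m true) q = q + (m : ZMod n) := by
  induction m generalizing q with
  | zero => simp [wact]
  | succ k ih =>
    rw [List.replicate_succ]
    show wact a (List.replicate k true) (act a q true) = _
    have : act a q true = q + 1 := rfl
    rw [this, ih]
    push_cast; ring

lemma range_of_excl (h : excl a w = {c}) : Set.range (wact a w) = {c}ᶜ := by
  ext q
  simp only [Set.mem_range, Set.mem_compl_iff, Set.mem_singleton_iff]
  constructor
  · rintro ⟨p, rfl⟩ hq
    have : c ∈ excl a w := by rw [h]; rfl
    exact this p hq
  · intro hq
    by_contra hcon
    push_neg at hcon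
    have : q ∈ excl a w := fun p hp => hcon p hp
    rw [h] at this
    exact hq this

variable (h1 : Set.range a = {(0 : ZMod n)}ᶜ) {r : ZMod n} (hr : r ≠ 0) (hra : a r = a 0)

include h1 in
lemma a_ne_zero (z : ZMod n) : a z ≠ 0 := by
  intro hz
  have : a z ∈ Set.range a := ⟨z, rfl⟩
  rw [h1] at this
  exact this hz

include h1 hr hra in
lemma fiber_dichotomy [NeZero n] {x y : ZMod n} (hxy : a x = a y) :
    x = y ∨ (x = 0 ∧ y = r) ∨ (x = r ∧ y = 0) := by
  have hsurj : ∀ b ∈ ({(0:ZMod n)}ᶜ : Set (ZMod n)), ∃ z, ∃ _ : z ∈ ({r}ᶜ : Set (ZMod n)),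
      (fun (z : ZMod n) (_ : z ∈ ({r}ᶜ : Set (ZMod n))) => a z) z ‹_› = b := by
    intro b hb
    have : b ∈ Set.range a := by rw [h1]; exact hb
    obtain ⟨x, rfl⟩ := this
    by_cases hx : x = r
    · exact ⟨0, fun h0 => hr (h0.symm), by simp only; rw [hx, hra]⟩
    · exact ⟨x, hx, rfl⟩
  have hcard : ({r}ᶜ : Set (ZMod n)).ncard ≤ ({(0:ZMod n)}ᶜ : Set (ZMod n)).ncard := by
    have h₁ := Set.ncard_add_ncard_compl ({r} : Set (ZMod n))
    have h₂ := Set.ncard_add_ncard_compl ({(0:ZMod n)} : Set (ZMod n))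
    rw [Set.ncard_singleton] at h₁ h₂
    omega
  have hinj : Set.InjOn a ({r}ᶜ : Set (ZMod n)) := by
    intro x hx y hy hxy
    exact Set.inj_on_of_surj_on_of_ncard_le (s := ({r}ᶜ : Set (ZMod n)))
      (fun z _ => a z) (fun z hz => by
        simp only [Set.mem_compl_iff, Set.mem_singleton_iff]; exact a_ne_zero h1 z)
      hsurj hcard hx hy hxy
  by_cases hxr : x = r
  · subst hxr
    by_cases hyr : y = x
    · exact Or.inl hyr.symm
    · right; right
      refine ⟨rfl, ?_⟩
      have h0m : (0 : ZMod n) ∈ ({x}ᶜ : Set (ZMod n)) := fun h => hr h.symm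
      have hym : y ∈ ({x}ᶜ : Set (ZMod n)) := fun h => hyr h
      exact hinj hym h0m (by rw [← hxy, hra])
  · by_cases hyr : y = r
    · subst hyr
      right; left
      refine ⟨?_, rfl⟩
      have h0m : (0 : ZMod n) ∈ ({y}ᶜ : Set (ZMod n)) := fun h => hr h.symm
      have hxm : x ∈ ({y}ᶜ : Set (ZMod n)) := fun h => hxr h
      exact hinj hxm h0m (by rw [hxy, hra])
    · exact Or.inl (hinj hxr hyr hxy)

include h1 hr hra in
lemma base_word [NeZero n] : excl a [false] = {(0 : ZMod n)} ∧ dupl a [false] = {a 0} := by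
  have hw : ∀ q, wact a [false] q = a q := fun q => rfl
  constructor
  · ext q
    simp only [excl, Set.mem_setOf_eq, Set.mem_singleton_iff, hw]
    constructor
    · intro h
      by_contra hq
      have : q ∈ Set.range a := by rw [h1]; exact hq
      obtain ⟨p, hp⟩ := this
      exact h p hp
    · rintro rfl p
      exact a_ne_zero h1 p
  · ext p
    simp only [dupl, Set.mem_setOf_eq, Set.mem_singleton_iff, hw]
    constructor
    · rintro ⟨q₁, q₂, hne, h₁, h₂⟩
      rcases fiber_dichotomy h1 hr hra (h₁.trans h₂.symm) with h | ⟨rfl, rfl⟩ | ⟨rfl, rfl⟩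
      · exact absurd h hne
      · exact h₁.symm
      · rw [← h₁, hra]
    · rintro rfl
      exact ⟨0, r, fun h => hr h.symm, rfl, hra⟩

include h1 hr hra in
lemma step_word [NeZero n] {w : List Bool} {c d : ZMod n} (hc : c = 0 ∨ c = r)
    (he : excl a w = {c}) (hd : dupl a w = {d}) :
    excl a (w ++ [false]) = {(0 : ZMod n)} ∧ dupl a (w ++ [false]) = {a d} := by
  have hrange := range_of_excl he
  constructor
  · ext q
    simp only [excl, Set.mem_setOf_eq, Set.mem_singleton_iff, wact_false]
    constructor
    · intro h
      by_contra hq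
      have : q ∈ Set.range a := by rw [h1]; exact hq
      obtain ⟨x, hx⟩ := this
      by_cases hxc : x = c
      · subst hxc
        rcases hc with rfl | rfl
        · have : r ∈ Set.range (wact a w) := by
            rw [hrange]; exact hr
          obtain ⟨p, hp⟩ := this
          exact h p (by rw [hp, hra, hx])
        · have : (0 : ZMod n) ∈ Set.range (wact a w) := by
            rw [hrange]; exact fun h0 => hr h0.symm
          obtain ⟨p, hp⟩ := this
          exact h p (by rw [hp, ← hra, hx])
      · have : x ∈ Set.range (wact a w) := by rw [hrange]; exact hxc
        obtain ⟨p, hp⟩ := this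
        exact h p (by rw [hp, hx])
    · rintro rfl p
      exact a_ne_zero h1 _
  · ext p
    simp only [dupl, Set.mem_setOf_eq, Set.mem_singleton_iff, wact_false]
    constructor
    · rintro ⟨q₁, q₂, hne, h₁, h₂⟩
      have hx₁ : wact a w q₁ ∈ Set.range (wact a w) := ⟨q₁, rfl⟩
      have hx₂ : wact a w q₂ ∈ Set.range (wact a w) := ⟨q₂, rfl⟩
      rw [hrange] at hx₁ hx₂
      rcases fiber_dichotomy h1 hr hra (h₁.trans h₂.symm) with h | ⟨e₁, e₂⟩ | ⟨e₁, e₂⟩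
      · have : wact a w q₁ ∈ dupl a w := ⟨q₁, q₂, hne, rfl, h.symm⟩
        rw [hd] at this
        rw [← h₁, this]
      · exfalso
        rcases hc with rfl | rfl
        · exact hx₁ e₁
        · exact hx₂ e₂
      · exfalso
        rcases hc with rfl | rfl
        · exact hx₂ e₂
        · exact hx₁ e₁
    · rintro rfl
      have : d ∈ dupl a w := by rw [hd]; rfl
      obtain ⟨q₁, q₂, hne, h₁, h₂⟩ := this
      exact ⟨q₁, q₂, hne, by rw [h₁], by rw [h₂]⟩

lemma shift_word {w : List Bool} {d : ZMod n} (m : ℕ)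
    (he : excl a w = {(0 : ZMod n)}) (hd : dupl a w = {d}) :
    excl a (w ++ List.replicate m true) = {((m : ZMod n))} ∧
      dupl a (w ++ List.replicate m true) = {d + (m : ZMod n)} := by
  have hw : ∀ q, wact a (w ++ List.replicate m true) q = wact a w q + (m : ZMod n) := by
    intro q; rw [wact_append, wact_replicate_true]
  constructor
  · ext q
    simp only [excl, Set.mem_setOf_eq, Set.mem_singleton_iff, hw]
    constructor
    · intro h
      have hmem : q - (m : ZMod n) ∈ excl a w := by
        intro p hp
        exact h p (by rw [hp]; ring)
      rw [he, Set.mem_singleton_iff, sub_eq_zero] at hmem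
      exact hmem
    · rintro rfl p hp
      have h0 : (0 : ZMod n) ∈ excl a w := by rw [he]; rfl
      exact h0 p (by linear_combination hp)
  · ext p
    simp only [dupl, Set.mem_setOf_eq, Set.mem_singleton_iff, hw]
    constructor
    · rintro ⟨q₁, q₂, hne, h₁, h₂⟩
      have : p - (m : ZMod n) ∈ dupl a w :=
        ⟨q₁, q₂, hne, by linear_combination h₁, by linear_combination h₂⟩
      rw [hd, Set.mem_singleton_iff] at this
      linear_combination this
    · rintro rfl
      have : d ∈ dupl a w := by rw [hd]; rfl
      obtain ⟨q₁, q₂, hne, h₁, h₂⟩ := this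
      exact ⟨q₁, q₂, hne, by rw [h₁], by rw [h₂]⟩

end Aux

theorem D1zero_union_of_cosets {n : ℕ} (hn : 2 ≤ n) (a : ZMod n → ZMod n)
    (h1 : Set.range a = {(0 : ZMod n)}ᶜ)
    (r : ZMod n) (hr : r ≠ 0) (hra : a r = a 0) :
    (∀ d ∈ D1 a ∪ {0}, d + r ∈ D1 a ∪ {0}) ∧
    (∀ d ∈ D1 a ∪ {0}, ∀ h ∈ AddSubgroup.closure {r}, d + h ∈ D1 a ∪ {0}) := by
  
  haveI : NeZero n := ⟨by omega⟩
  set D0 : Set (ZMod n) := D1 a ∪ {0} with hD0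
  have hne0 : ∀ d ∈ D1 a, d ≠ 0 := by
    rintro d ⟨w, he, hd⟩ rfl
    have : (0 : ZMod n) ∈ dupl a w := by rw [hd]; rfl
    obtain ⟨q₁, _, _, h₁, _⟩ := this
    have h0 : (0 : ZMod n) ∈ excl a w := by rw [he]; rfl
    exact h0 q₁ h₁
  have h0D : (0 : ZMod n) ∈ D0 := Or.inr rfl
  have hsub : D1 a ⊆ D0 := Set.subset_union_left
  have hCD : D1 a = D0 \ {0} := by
    ext x
    simp only [hD0, Set.mem_diff, Set.mem_union, Set.mem_singleton_iff]
    constructor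
    · intro hx; exact ⟨Or.inl hx, hne0 x hx⟩
    · rintro ⟨hx | rfl, hx0⟩
      · exact hx
      · exact absurd rfl hx0
  have hf : ∀ d ∈ D0, a d ∈ D1 a := by
    rintro d (⟨w, he, hd⟩ | rfl)
    · obtain ⟨he', hd'⟩ := step_word h1 hr hra (Or.inl rfl) he hd
      exact ⟨w ++ [false], he', hd'⟩
    · obtain ⟨he', hd'⟩ := base_word h1 hr hra
      exact ⟨[false], he', hd'⟩
  have hg : ∀ d ∈ D0, a (d + r) ∈ D1 a := by
    rintro d (⟨w, he, hd⟩ | rfl)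
    · obtain ⟨he', hd'⟩ := shift_word r.val he hd
      rw [ZMod.natCast_rightInverse r] at he' hd'
      obtain ⟨he'', hd''⟩ := step_word h1 hr hra (Or.inr rfl) he' hd'
      exact ⟨(w ++ List.replicate r.val true) ++ [false], he'', hd''⟩
    · rw [zero_add, hra]
      exact hf 0 (Or.inr rfl)
  have hrD : r ∈ D1 a := by
    by_contra hrD
    have hinj : Set.InjOn a D0 := by
      intro x hx y hy hxy
      rcases fiber_dichotomy h1 hr hra hxy with h | ⟨rfl, rfl⟩ | ⟨rfl, rfl⟩
      · exact h
      · rcases hy with hy | hy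
        · exact absurd hy hrD
        · exact absurd hy hr
      · rcases hx with hx | hx
        · exact absurd hx hrD
        · exact absurd hx hr
    have hle : D0.ncard ≤ (D1 a).ncard :=
      Set.ncard_le_ncard_of_injOn a hf hinj (Set.toFinite _)
    have hlt : (D1 a).ncard < D0.ncard := by
      apply Set.ncard_lt_ncard _ (Set.toFinite _)
      exact ⟨hsub, fun hss => hne0 0 (hss h0D) rfl⟩
    omega
  have hrD0 : r ∈ D0 := hsub hrD
  have key : ∀ d ∈ D0, d + r ∈ D0 := by
    intro d hd
    by_cases hdr0 : d + r = 0
    · rw [hdr0]; exact h0D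
    rcases hd with hd | hd
    swap
    · rw [Set.mem_singleton_iff] at hd
      rw [hd, zero_add]; exact hrD0
    have had : a (d + r) ∈ D1 a := hg d (Or.inl hd)
    have hcard : (D1 a).ncard ≤ (D0 \ {r}).ncard := by
      rw [hCD, Set.ncard_diff_singleton_of_mem h0D,
        Set.ncard_diff_singleton_of_mem hrD0]
    have hsurj := Set.surj_on_of_inj_on_of_ncard_le (s := D0 \ {r}) (t := D1 a)
      (fun x _ => a x)
      (fun x hx => hf x hx.1)
      (fun x₁ x₂ hx₁ hx₂ hxy => by
        rcases fiber_dichotomy h1 hr hra hxy with h | ⟨e₁, e₂⟩ | ⟨e₁, e₂⟩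
        · exact h
        · exact absurd e₂ hx₂.2
        · exact absurd e₁ hx₁.2)
      hcard (Set.toFinite _)
    obtain ⟨x, hx, hxeq⟩ := hsurj (a (d + r)) had
    rcases fiber_dichotomy h1 hr hra hxeq.symm with h | ⟨e₁, e₂⟩ | ⟨e₁, e₂⟩
    · rw [← h]; exact hx.1
    · exact absurd (by linear_combination e₂ : d = 0) (hne0 d hd)
    · exact absurd e₁ hx.2
  refine ⟨key, ?_⟩
  intro d hd h hmem
  have P : ∀ x ∈ AddSubgroup.closure ({r} : Set (ZMod n)), ∀ e ∈ D0, e + x ∈ D0 := by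
    intro x hx
    induction hx using AddSubgroup.closure_induction with
    | mem y hy =>
      rw [Set.mem_singleton_iff] at hy
      subst hy
      exact key
    | zero => intro e he; rwa [add_zero]
    | add y z _ _ py pz =>
      intro e he
      rw [← add_assoc]
      exact pz _ (py e he)
    | neg y _ py =>
      intro e he
      have hbij := ((Set.toFinite D0).injOn_iff_bijOn_of_mapsTo
        (f := fun z => z + y) (fun z hz => py z hz)).mp
        (fun z₁ _ z₂ _ hz => by simpa using hz)
      obtain ⟨e', he', hee⟩ := hbij.surjOn he
      simp only at hee
      rw [← hee, add_assoc, add_neg_cancel, add_zero]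
      exact he'
  exact P h hmem d hd
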